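/- Let x < a and b < 0, and let f(s) = (a−x)·s^{−3/2}·φ((a + bs − x)/√s) for s > 0 be the first-passage-time density of Brownian motion started at x through the line a + bt. Then ∫_0^∞ (1 − 2Φ(b√s))·f(s) ds ≤ 1 − 2Φ(−√((a−x)·|b|)); that is, P(T₂ = +∞) ≤ γ(b) where γ(b) = 2·sgn(b)·(Φ(b√((a−x)/|b|)) − 1/2), by Jensen's inequality applied to the concave function s ↦ 1 − 2Φ(b√s) and the mean E(τ₁) = (a−x)/|b|. -/

import Mathlib

open MeasureTheory Set Filter
open scoped Topology

/-- The standard normal density `φ`. -/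
noncomputable def stdPhi (z : ℝ) : ℝ := Real.exp (-z ^ 2 / 2) / Real.sqrt (2 * Real.pi)

/-- The standard normal cumulative distribution function `Φ`. -/
noncomputable def Phi (y : ℝ) : ℝ := ∫ z in Set.Iic y, stdPhi z

/-- The (possibly defective) first-passage-time density of Brownian motion started at `x`
through the line `a + b s`. -/
noncomputable def fpt (a x b s : ℝ) : ℝ :=
  (a - x) * s ^ (-(3:ℝ) / 2) * stdPhi ((a + b * s - x) / Real.sqrt s)


lemma stdPhi_pos (z : ℝ) : 0 < stdPhi z :=
  div_pos (Real.exp_pos _) (Real.sqrt_pos.2 (by positivity))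

lemma stdPhi_neg (z : ℝ) : stdPhi (-z) = stdPhi z := by simp [stdPhi]

lemma continuous_stdPhi : Continuous stdPhi := by
  unfold stdPhi
  exact (Real.continuous_exp.comp (by continuity)).div_const _

lemma stdPhi_eq : stdPhi = fun z => Real.exp (-(1/2 : ℝ) * z ^ 2) / Real.sqrt (2 * Real.pi) := by
  funext z; unfold stdPhi; ring_nf

lemma integrable_stdPhi : Integrable stdPhi := by
  rw [stdPhi_eq]
  exact (integrable_exp_neg_mul_sq (by norm_num)).div_const _

lemma integral_stdPhi : ∫ z, stdPhi z = 1 := by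
  rw [stdPhi_eq]
  rw [integral_div, integral_gaussian]
  rw [show Real.pi / (1/2) = 2 * Real.pi by ring]
  exact div_self (ne_of_gt (Real.sqrt_pos.2 (by positivity)))

lemma Phi_eq (y : ℝ) : Phi y = Phi 0 + ∫ t in (0:ℝ)..y, stdPhi t := by
  have h := intervalIntegral.integral_Iic_sub_Iic (integrable_stdPhi.integrableOn (s := Iic (0:ℝ)))
    (integrable_stdPhi.integrableOn (s := Iic y))
  unfold Phi
  linarith [h]

lemma hasDerivAt_Phi (y : ℝ) : HasDerivAt Phi (stdPhi y) y := by
  have h : Phi = fun y => Phi 0 + ∫ t in (0:ℝ)..y, stdPhi t := funext Phi_eq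
  rw [h]
  exact (intervalIntegral.integral_hasDerivAt_right
    (integrable_stdPhi.intervalIntegrable)
    (continuous_stdPhi.stronglyMeasurable.stronglyMeasurableAtFilter)
    continuous_stdPhi.continuousAt).const_add _

lemma continuous_Phi : Continuous Phi :=
  continuous_iff_continuousAt.2 fun y => (hasDerivAt_Phi y).continuousAt

lemma Phi_nonneg (y : ℝ) : 0 ≤ Phi y :=
  setIntegral_nonneg measurableSet_Iic fun z _ => (stdPhi_pos z).le

lemma Phi_le_one (y : ℝ) : Phi y ≤ 1 := by
  rw [← integral_stdPhi]
  exact setIntegral_le_integral integrable_stdPhi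
    (Eventually.of_forall fun z => (stdPhi_pos z).le)

lemma tendsto_Phi_atTop : Tendsto Phi atTop (𝓝 1) := by
  have h1 : Tendsto (fun y => Phi 0 + ∫ t in (0:ℝ)..y, stdPhi t) atTop
      (𝓝 (Phi 0 + ∫ t in Ioi (0:ℝ), stdPhi t)) :=
    ((intervalIntegral_tendsto_integral_Ioi 0 integrable_stdPhi.integrableOn
      tendsto_id).const_add _)
  have h2 : Phi 0 + ∫ t in Ioi (0:ℝ), stdPhi t = 1 := by
    unfold Phi
    rw [intervalIntegral.integral_Iic_add_Ioi integrable_stdPhi.integrableOn integrable_stdPhi.integrableOn,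
      integral_stdPhi]
  rw [← funext Phi_eq] at h1
  rwa [h2] at h1

lemma tendsto_Phi_atBot : Tendsto Phi atBot (𝓝 0) := by
  have h1 : Tendsto (fun y => ∫ t in y..(0:ℝ), stdPhi t) atBot (𝓝 (Phi 0)) :=
    intervalIntegral_tendsto_integral_Iic 0 integrable_stdPhi.integrableOn tendsto_id
  have h2 : ∀ y, Phi y = Phi 0 - ∫ t in y..(0:ℝ), stdPhi t := fun y => by
    rw [Phi_eq y, intervalIntegral.integral_symm]; ring
  rw [funext h2]
  simpa using (tendsto_const_nhds (x := Phi 0)).sub h1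

lemma stdPhi_anti {u v : ℝ} (hu : 0 ≤ u) (huv : u ≤ v) : stdPhi v ≤ stdPhi u := by
  unfold stdPhi
  have h : Real.exp (-v ^ 2 / 2) ≤ Real.exp (-u ^ 2 / 2) := Real.exp_le_exp.2 (by nlinarith)
  exact (div_le_div_iff_of_pos_right (Real.sqrt_pos.2 (by positivity))).2 h

lemma sqrt_ne {s : ℝ} (hs : 0 < s) : Real.sqrt s ≠ 0 :=
  ne_of_gt (Real.sqrt_pos.2 hs)

lemma hasDerivAt_ratio (k l : ℝ) {s : ℝ} (hs : 0 < s) :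
    HasDerivAt (fun t => (k * t + l) / Real.sqrt t)
      ((k * s - l) / (2 * s * Real.sqrt s)) s := by
  have h1 : HasDerivAt (fun t : ℝ => k * t + l) k s := by
    simpa using ((hasDerivAt_id s).const_mul k).add_const l
  have h2 : HasDerivAt Real.sqrt (1 / (2 * Real.sqrt s)) s := Real.hasDerivAt_sqrt hs.ne'
  have h3 := h1.div h2 (sqrt_ne hs)
  refine h3.congr_deriv ?_
  symm
  obtain ⟨r, hr, rfl⟩ : ∃ r, 0 < r ∧ r ^ 2 = s :=
    ⟨Real.sqrt s, Real.sqrt_pos.2 hs, Real.sq_sqrt hs.le⟩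
  rw [Real.sqrt_sq hr.le]
  have hr0 : r ≠ 0 := hr.ne'
  field_simp
  ring

lemma hasDerivAt_Phi_ratio (k l : ℝ) {s : ℝ} (hs : 0 < s) :
    HasDerivAt (fun t => Phi ((k * t + l) / Real.sqrt t))
      (stdPhi ((k * s + l) / Real.sqrt s) * ((k * s - l) / (2 * s * Real.sqrt s))) s :=
  (hasDerivAt_Phi _).comp s (hasDerivAt_ratio k l hs)

lemma tendsto_sqrt_atTop : Tendsto Real.sqrt atTop atTop := by
  apply tendsto_atTop_atTop.2
  intro b
  refine ⟨max 0 (b ^ 2), fun s hs => ?_⟩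
  rcases le_or_gt b 0 with hb | hb
  · exact hb.trans (Real.sqrt_nonneg s)
  · have : b ^ 2 ≤ s := le_trans (le_max_right _ _) hs
    calc b = Real.sqrt (b ^ 2) := (Real.sqrt_sq hb.le).symm
    _ ≤ Real.sqrt s := Real.sqrt_le_sqrt this

lemma tendsto_ratio_atTop {k : ℝ} (hk : 0 < k) (l : ℝ) :
    Tendsto (fun s => (k * s + l) / Real.sqrt s) atTop atTop := by
  have h1 : Tendsto (fun s : ℝ => k * Real.sqrt s) atTop atTop :=
    tendsto_sqrt_atTop.const_mul_atTop hk
  have h2 : Tendsto (fun s : ℝ => l / Real.sqrt s) atTop (𝓝 0) :=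
    tendsto_const_nhds.div_atTop tendsto_sqrt_atTop
  have h3 := h1.atTop_add h2
  refine h3.congr' ?_
  filter_upwards [eventually_gt_atTop (0:ℝ)] with s hs
  have hr2 : Real.sqrt s ^ 2 = s := Real.sq_sqrt hs.le
  have hr0 : Real.sqrt s ≠ 0 := sqrt_ne hs
  field_simp
  linear_combination k * hr2

lemma tendsto_ratio_atBot {k : ℝ} (hk : k < 0) (l : ℝ) :
    Tendsto (fun s => (k * s + l) / Real.sqrt s) atTop atBot := by
  have h := tendsto_ratio_atTop (k := -k) (by linarith) (-l)
  have : (fun s => (k * s + l) / Real.sqrt s) = fun s => -((-k * s + -l) / Real.sqrt s) := by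
    funext s; ring
  rw [this]
  exact tendsto_neg_atBot_iff.2 h

lemma tendsto_ratio_zero (k : ℝ) {l : ℝ} (hl : l < 0) :
    Tendsto (fun s => (k * s + l) / Real.sqrt s) (𝓝[>] (0:ℝ)) atBot := by
  have h1 : Tendsto (fun s : ℝ => k * s + l) (𝓝[>] (0:ℝ)) (𝓝 l) := by
    have h : Tendsto (fun s : ℝ => k * s + l) (𝓝 0) (𝓝 (k * 0 + l)) :=
      Continuous.tendsto (by continuity) 0
    simpa using h.mono_left nhdsWithin_le_nhds
  have h2 : Tendsto (fun s : ℝ => (Real.sqrt s)⁻¹) (𝓝[>] (0:ℝ)) atTop := by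
    apply tendsto_inv_nhdsGT_zero.comp
    apply tendsto_nhdsWithin_of_tendsto_nhds_of_eventually_within
    · have : Tendsto Real.sqrt (𝓝 0) (𝓝 (Real.sqrt 0)) := Real.continuous_sqrt.tendsto 0
      simpa using this.mono_left nhdsWithin_le_nhds
    · filter_upwards [self_mem_nhdsWithin] with s hs
      exact Real.sqrt_pos.2 hs
  have h3 := h1.neg_mul_atTop hl h2
  simpa [div_eq_mul_inv] using h3

noncomputable def Ffun (b c : ℝ) (s : ℝ) : ℝ :=
  if s ≤ 0 then 0 else
    Phi ((-b * s + -c) / Real.sqrt s) + Real.exp (-(2 * b * c)) * Phi ((b * s + -c) / Real.sqrt s)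

noncomputable def Gfun (b c : ℝ) (s : ℝ) : ℝ :=
  if s ≤ 0 then 0 else
    (c / (-b)) * (Phi ((-b * s + -c) / Real.sqrt s)
      - Real.exp (-(2 * b * c)) * Phi ((b * s + -c) / Real.sqrt s))

lemma stdPhi_key {b c s : ℝ} (hs : 0 < s) :
    Real.exp (-(2 * b * c)) * stdPhi ((b * s + -c) / Real.sqrt s)
      = stdPhi ((-b * s + -c) / Real.sqrt s) := by
  obtain ⟨r, hr, rfl⟩ : ∃ r, 0 < r ∧ r ^ 2 = s :=
    ⟨Real.sqrt s, Real.sqrt_pos.2 hs, Real.sq_sqrt hs.le⟩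
  rw [Real.sqrt_sq hr.le]
  have hr0 : r ≠ 0 := hr.ne'
  unfold stdPhi
  rw [mul_div_assoc', ← Real.exp_add]
  congr 1
  field_simp
  ring

lemma rpow_neg_three_halves {s : ℝ} (hs : 0 < s) :
    s ^ (-(3:ℝ) / 2) = 1 / (s * Real.sqrt s) := by
  rw [show (-(3:ℝ)/2) = -(1 + 1/2) by norm_num, Real.rpow_neg hs.le, Real.rpow_add hs,
    Real.rpow_one, ← Real.sqrt_eq_rpow]
  rw [one_div]

lemma hasDerivAt_Ffun {b c : ℝ} (hc : 0 < c) {s : ℝ} (hs : 0 < s) :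
    HasDerivAt (Ffun b c)
      (c * s ^ (-(3:ℝ) / 2) * stdPhi ((c + b * s) / Real.sqrt s)) s := by
  have hA := hasDerivAt_Phi_ratio (-b) (-c) hs
  have hB := (hasDerivAt_Phi_ratio b (-c) hs).const_mul (Real.exp (-(2 * b * c)))
  have h := hA.add hB
  have heq : Ffun b c =ᶠ[𝓝 s] fun t =>
      Phi ((-b * t + -c) / Real.sqrt t)
        + Real.exp (-(2 * b * c)) * Phi ((b * t + -c) / Real.sqrt t) := by
    filter_upwards [eventually_gt_nhds hs] with t ht
    simp [Ffun, not_le.2 ht]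
  refine HasDerivAt.congr_of_eventuallyEq ?_ heq
  refine h.congr_deriv ?_
  symm
  have harg : (c + b * s) / Real.sqrt s = -((-b * s + -c) / Real.sqrt s) := by ring
  rw [harg, stdPhi_neg, rpow_neg_three_halves hs, ← stdPhi_key (b := b) (c := c) hs]
  obtain ⟨r, hr, rfl⟩ : ∃ r, 0 < r ∧ r ^ 2 = s :=
    ⟨Real.sqrt s, Real.sqrt_pos.2 hs, Real.sq_sqrt hs.le⟩
  rw [Real.sqrt_sq hr.le]
  have hr0 : r ≠ 0 := hr.ne'
  set P := stdPhi ((b * r ^ 2 + -c) / r)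
  field_simp
  ring

lemma hasDerivAt_Gfun {b c : ℝ} (hb : b < 0) (hc : 0 < c) {s : ℝ} (hs : 0 < s) :
    HasDerivAt (Gfun b c)
      (s * (c * s ^ (-(3:ℝ) / 2) * stdPhi ((c + b * s) / Real.sqrt s))) s := by
  have hA := hasDerivAt_Phi_ratio (-b) (-c) hs
  have hB := (hasDerivAt_Phi_ratio b (-c) hs).const_mul (Real.exp (-(2 * b * c)))
  have h := (hA.sub hB).const_mul (c / (-b))
  have heq : Gfun b c =ᶠ[𝓝 s] fun t =>
      (c / (-b)) * (Phi ((-b * t + -c) / Real.sqrt t)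
        - Real.exp (-(2 * b * c)) * Phi ((b * t + -c) / Real.sqrt t)) := by
    filter_upwards [eventually_gt_nhds hs] with t ht
    simp [Gfun, not_le.2 ht]
  refine HasDerivAt.congr_of_eventuallyEq ?_ heq
  refine h.congr_deriv ?_
  symm
  have harg : (c + b * s) / Real.sqrt s = -((-b * s + -c) / Real.sqrt s) := by ring
  rw [harg, stdPhi_neg, rpow_neg_three_halves hs, ← stdPhi_key (b := b) (c := c) hs]
  obtain ⟨r, hr, rfl⟩ : ∃ r, 0 < r ∧ r ^ 2 = s :=
    ⟨Real.sqrt s, Real.sqrt_pos.2 hs, Real.sq_sqrt hs.le⟩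
  rw [Real.sqrt_sq hr.le]
  have hr0 : r ≠ 0 := hr.ne'
  have hb0 : b ≠ 0 := hb.ne
  set P := stdPhi ((b * r ^ 2 + -c) / r)
  field_simp
  ring

lemma tendsto_Ffun_atTop {b c : ℝ} (hb : b < 0) (hc : 0 < c) :
    Tendsto (Ffun b c) atTop (𝓝 1) := by
  have hA : Tendsto (fun s => Phi ((-b * s + -c) / Real.sqrt s)) atTop (𝓝 1) :=
    tendsto_Phi_atTop.comp (tendsto_ratio_atTop (by linarith) _)
  have hB : Tendsto (fun s => Phi ((b * s + -c) / Real.sqrt s)) atTop (𝓝 0) :=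
    tendsto_Phi_atBot.comp (tendsto_ratio_atBot hb _)
  have h := hA.add ((hB.const_mul (Real.exp (-(2 * b * c)))))
  rw [show (1:ℝ) + Real.exp (-(2*b*c)) * 0 = 1 by ring] at h
  refine h.congr' ?_
  filter_upwards [eventually_gt_atTop (0:ℝ)] with s hs
  simp [Ffun, not_le.2 hs]

lemma tendsto_Gfun_atTop {b c : ℝ} (hb : b < 0) (hc : 0 < c) :
    Tendsto (Gfun b c) atTop (𝓝 (c / (-b))) := by
  have hA : Tendsto (fun s => Phi ((-b * s + -c) / Real.sqrt s)) atTop (𝓝 1) :=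
    tendsto_Phi_atTop.comp (tendsto_ratio_atTop (by linarith) _)
  have hB : Tendsto (fun s => Phi ((b * s + -c) / Real.sqrt s)) atTop (𝓝 0) :=
    tendsto_Phi_atBot.comp (tendsto_ratio_atBot hb _)
  have h := ((hA.sub (hB.const_mul (Real.exp (-(2 * b * c))))).const_mul (c / (-b)))
  rw [show (c / (-b)) * (1 - Real.exp (-(2*b*c)) * 0) = c / (-b) by ring] at h
  refine h.congr' ?_
  filter_upwards [eventually_gt_atTop (0:ℝ)] with s hs
  simp [Gfun, not_le.2 hs]

lemma continuousWithinAt_Ffun {b c : ℝ} (hb : b < 0) (hc : 0 < c) :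
    ContinuousWithinAt (Ffun b c) (Ici 0) 0 := by
  rw [← continuousWithinAt_diff_self, Ici_sdiff_left]
  have hA : Tendsto (fun s => Phi ((-b * s + -c) / Real.sqrt s)) (𝓝[>] 0) (𝓝 0) :=
    tendsto_Phi_atBot.comp (tendsto_ratio_zero _ (by linarith))
  have hB : Tendsto (fun s => Phi ((b * s + -c) / Real.sqrt s)) (𝓝[>] 0) (𝓝 0) :=
    tendsto_Phi_atBot.comp (tendsto_ratio_zero _ (by linarith))
  have h := hA.add (hB.const_mul (Real.exp (-(2 * b * c))))
  rw [show (0:ℝ) + Real.exp (-(2*b*c)) * 0 = 0 by ring] at h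
  have h0 : Ffun b c 0 = 0 := by simp [Ffun]
  rw [ContinuousWithinAt, h0]
  refine h.congr' ?_
  filter_upwards [self_mem_nhdsWithin] with s hs
  simp [Ffun, not_le.2 (mem_Ioi.1 hs)]

lemma continuousWithinAt_Gfun {b c : ℝ} (hb : b < 0) (hc : 0 < c) :
    ContinuousWithinAt (Gfun b c) (Ici 0) 0 := by
  rw [← continuousWithinAt_diff_self, Ici_sdiff_left]
  have hA : Tendsto (fun s => Phi ((-b * s + -c) / Real.sqrt s)) (𝓝[>] 0) (𝓝 0) :=
    tendsto_Phi_atBot.comp (tendsto_ratio_zero _ (by linarith))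
  have hB : Tendsto (fun s => Phi ((b * s + -c) / Real.sqrt s)) (𝓝[>] 0) (𝓝 0) :=
    tendsto_Phi_atBot.comp (tendsto_ratio_zero _ (by linarith))
  have h := (hA.sub (hB.const_mul (Real.exp (-(2 * b * c))))).const_mul (c / (-b))
  rw [show (c / (-b)) * (0 - Real.exp (-(2*b*c)) * 0) = 0 by ring] at h
  have h0 : Gfun b c 0 = 0 := by simp [Gfun]
  rw [ContinuousWithinAt, h0]
  refine h.congr' ?_
  filter_upwards [self_mem_nhdsWithin] with s hs
  simp [Gfun, not_le.2 (mem_Ioi.1 hs)]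

lemma fpt'_nonneg {b c : ℝ} (hc : 0 < c) {s : ℝ} (hs : s ∈ Ioi (0:ℝ)) :
    0 ≤ c * s ^ (-(3:ℝ) / 2) * stdPhi ((c + b * s) / Real.sqrt s) := by
  have h1 := Real.rpow_nonneg (le_of_lt (mem_Ioi.1 hs)) (-(3:ℝ)/2)
  have h2 := (stdPhi_pos ((c + b * s) / Real.sqrt s)).le
  have := hc.le
  positivity

lemma integral_fpt' {b c : ℝ} (hb : b < 0) (hc : 0 < c) :
    ∫ s in Ioi (0:ℝ), c * s ^ (-(3:ℝ) / 2) * stdPhi ((c + b * s) / Real.sqrt s) = 1 := by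
  have h := integral_Ioi_of_hasDerivAt_of_nonneg (continuousWithinAt_Ffun hb hc)
    (fun s hs => hasDerivAt_Ffun hc (mem_Ioi.1 hs)) (fun s hs => fpt'_nonneg hc hs)
    (tendsto_Ffun_atTop hb hc)
  simpa [Ffun] using h

lemma integrableOn_fpt' {b c : ℝ} (hb : b < 0) (hc : 0 < c) :
    IntegrableOn (fun s => c * s ^ (-(3:ℝ) / 2) * stdPhi ((c + b * s) / Real.sqrt s))
      (Ioi (0:ℝ)) :=
  integrableOn_Ioi_deriv_of_nonneg (continuousWithinAt_Ffun hb hc)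
    (fun s hs => hasDerivAt_Ffun hc (mem_Ioi.1 hs)) (fun s hs => fpt'_nonneg hc hs)
    (tendsto_Ffun_atTop hb hc)

lemma integral_sfpt' {b c : ℝ} (hb : b < 0) (hc : 0 < c) :
    ∫ s in Ioi (0:ℝ), s * (c * s ^ (-(3:ℝ) / 2) * stdPhi ((c + b * s) / Real.sqrt s))
      = c / (-b) := by
  have h := integral_Ioi_of_hasDerivAt_of_nonneg (continuousWithinAt_Gfun hb hc)
    (fun s hs => hasDerivAt_Gfun hb hc (mem_Ioi.1 hs))
    (fun s hs => mul_nonneg (le_of_lt (mem_Ioi.1 hs)) (fpt'_nonneg hc hs))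
    (tendsto_Gfun_atTop hb hc)
  simpa [Gfun] using h

lemma integrableOn_sfpt' {b c : ℝ} (hb : b < 0) (hc : 0 < c) :
    IntegrableOn (fun s => s * (c * s ^ (-(3:ℝ) / 2) * stdPhi ((c + b * s) / Real.sqrt s)))
      (Ioi (0:ℝ)) :=
  integrableOn_Ioi_deriv_of_nonneg (continuousWithinAt_Gfun hb hc)
    (fun s hs => hasDerivAt_Gfun hb hc (mem_Ioi.1 hs))
    (fun s hs => mul_nonneg (le_of_lt (mem_Ioi.1 hs)) (fpt'_nonneg hc hs))
    (tendsto_Gfun_atTop hb hc)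

noncomputable def hfun (b s : ℝ) : ℝ := Phi (b * Real.sqrt s)

noncomputable def pfun (b s : ℝ) : ℝ :=
  stdPhi (b * Real.sqrt s) * (b * (1 / (2 * Real.sqrt s)))

lemma hasDerivAt_hfun (b : ℝ) {s : ℝ} (hs : 0 < s) :
    HasDerivAt (hfun b) (pfun b s) s := by
  have h1 : HasDerivAt (fun t => b * Real.sqrt t) (b * (1 / (2 * Real.sqrt s))) s :=
    (Real.hasDerivAt_sqrt hs.ne').const_mul b
  exact (hasDerivAt_Phi _).comp s h1

lemma pfun_monotoneOn {b : ℝ} (hb : b < 0) : MonotoneOn (pfun b) (Ioi (0:ℝ)) := by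
  intro s hs t ht hst
  rw [← neg_le_neg_iff]
  have hrepr : ∀ u : ℝ, -(pfun b u)
      = stdPhi (-b * Real.sqrt u) * ((-b) * (1 / (2 * Real.sqrt u))) := by
    intro u
    have : b * Real.sqrt u = -(-b * Real.sqrt u) := by ring
    rw [pfun, this, stdPhi_neg]
    ring
  rw [hrepr, hrepr]
  have hs0 : 0 < s := mem_Ioi.1 hs
  have ht0 : 0 < t := mem_Ioi.1 ht
  have hss : Real.sqrt s ≤ Real.sqrt t := Real.sqrt_le_sqrt hst
  have h1 : stdPhi (-b * Real.sqrt t) ≤ stdPhi (-b * Real.sqrt s) :=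
    stdPhi_anti (mul_nonneg (by linarith) (Real.sqrt_nonneg _)) (by nlinarith)
  have h2 : (-b) * (1 / (2 * Real.sqrt t)) ≤ (-b) * (1 / (2 * Real.sqrt s)) := by
    apply mul_le_mul_of_nonneg_left ?_ (by linarith)
    apply one_div_le_one_div_of_le (by have := Real.sqrt_pos.2 hs0; linarith)
    linarith
  apply mul_le_mul h1 h2 (mul_nonneg (by linarith) (by positivity)) (stdPhi_pos _).le

lemma hfun_convexOn {b : ℝ} (hb : b < 0) : ConvexOn ℝ (Ioi (0:ℝ)) (hfun b) := by
  apply MonotoneOn.convexOn_of_deriv (convex_Ioi 0)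
  · exact (continuous_Phi.comp (continuous_const.mul Real.continuous_sqrt)).continuousOn
  · rw [interior_Ioi]
    exact fun s hs => ((hasDerivAt_hfun b (mem_Ioi.1 hs)).differentiableAt).differentiableWithinAt
  · rw [interior_Ioi]
    have heq : EqOn (deriv (hfun b)) (pfun b) (Ioi 0) := fun s hs =>
      (hasDerivAt_hfun b (mem_Ioi.1 hs)).deriv
    exact (pfun_monotoneOn hb).congr heq.symm

lemma tangent_le {b : ℝ} (hb : b < 0) {m s : ℝ} (hm : 0 < m) (hs : 0 < s) :
    hfun b m + pfun b m * (s - m) ≤ hfun b s := by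
  rcases lt_trichotomy s m with h | h | h
  · have := (hfun_convexOn hb).slope_le_of_hasDerivAt (mem_Ioi.2 hs) (mem_Ioi.2 hm) h
      (hasDerivAt_hfun b hm)
    rw [slope_def_field] at this
    have hd : 0 < m - s := by linarith
    rw [div_le_iff₀ hd] at this
    nlinarith
  · subst h; simp
  · have := (hfun_convexOn hb).le_slope_of_hasDerivAt (mem_Ioi.2 hm) (mem_Ioi.2 hs) h
      (hasDerivAt_hfun b hm)
    rw [slope_def_field] at this
    have hd : 0 < s - m := by linarith
    rw [le_div_iff₀ hd] at this
    nlinarith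


/-- for `x < a` and `b < 0`, Jensen's inequality gives
`P(T₂ = +∞) = ∫_0^∞ (1 - 2Φ(b√s)) f(s) ds ≤ γ(b) = 1 - 2Φ(-√((a-x)|b|))`. -/
theorem stmt_8 (a x b : ℝ) (hx : x < a) (hb : b < 0) :
    (∫ s in Set.Ioi (0:ℝ), (1 - 2 * Phi (b * Real.sqrt s)) * fpt a x b s) ≤
      1 - 2 * Phi (-Real.sqrt ((a - x) * |b|)) := by
  set c := a - x with hcdef
  have hc : 0 < c := sub_pos.2 hx
  have hnb : (0:ℝ) < -b := by linarith
  set f : ℝ → ℝ := fun s => c * s ^ (-(3:ℝ)/2) * stdPhi ((c + b * s) / Real.sqrt s) with hfdef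
  have hfpt : ∀ s : ℝ, fpt a x b s = f s := by
    intro s
    rw [fpt, hfdef]
    rw [show a + b * s - x = c + b * s by rw [hcdef]; ring]
  set m := c / (-b) with hmdef
  have hm : 0 < m := div_pos hc hnb
  set K1 := 1 - 2 * (hfun b m - pfun b m * m) with hK1
  set K2 := -2 * pfun b m with hK2
  have hint_f : IntegrableOn f (Ioi (0:ℝ)) := integrableOn_fpt' hb hc
  have hint_sf : IntegrableOn (fun s => s * f s) (Ioi (0:ℝ)) := integrableOn_sfpt' hb hc
  have hpt : ∀ s ∈ Ioi (0:ℝ),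
      (1 - 2 * Phi (b * Real.sqrt s)) * fpt a x b s ≤ K1 * f s + K2 * (s * f s) := by
    intro s hs
    have hs0 : 0 < s := mem_Ioi.1 hs
    rw [hfpt]
    have htan := tangent_le hb hm hs0
    have hf0 : 0 ≤ f s := fpt'_nonneg hc hs
    have h1 : (1 - 2 * Phi (b * Real.sqrt s)) * f s
        ≤ (1 - 2 * (hfun b m + pfun b m * (s - m))) * f s := by
      apply mul_le_mul_of_nonneg_right ?_ hf0
      have : Phi (b * Real.sqrt s) = hfun b s := rfl
      rw [this]
      linarith
    have h2 : (1 - 2 * (hfun b m + pfun b m * (s - m))) * f s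
        = K1 * f s + K2 * (s * f s) := by
      rw [hK1, hK2]; ring
    linarith
  have hcont_f : ∀ s ∈ Ioi (0:ℝ), ContinuousAt f s := by
    intro s hs
    have hs0 : 0 < s := mem_Ioi.1 hs
    have h1 : ContinuousAt (fun u : ℝ => u ^ (-(3:ℝ)/2)) s :=
      Real.continuousAt_rpow_const s _ (Or.inl hs0.ne')
    have h2 : ContinuousAt (fun u : ℝ => (c + b * u) / Real.sqrt u) s :=
      ((continuous_const.add (continuous_const.mul continuous_id)).continuousAt).div
        Real.continuous_sqrt.continuousAt (sqrt_ne hs0)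
    exact (continuousAt_const.mul h1).mul (continuous_stdPhi.continuousAt.comp h2)
  have haesm : AEStronglyMeasurable (fun s => (1 - 2 * Phi (b * Real.sqrt s)) * fpt a x b s)
      (volume.restrict (Ioi (0:ℝ))) := by
    have heq : (fun s => (1 - 2 * Phi (b * Real.sqrt s)) * fpt a x b s)
        = fun s => (1 - 2 * Phi (b * Real.sqrt s)) * f s := funext fun s => by rw [hfpt]
    rw [heq]
    apply ContinuousOn.aestronglyMeasurable ?_ measurableSet_Ioi
    intro s hs
    exact (((continuous_const.sub (continuous_const.mul
      (continuous_Phi.comp (continuous_const.mul Real.continuous_sqrt)))).continuousAt).mul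
      (hcont_f s hs)).continuousWithinAt
  have hLHSint : IntegrableOn (fun s => (1 - 2 * Phi (b * Real.sqrt s)) * fpt a x b s)
      (Ioi (0:ℝ)) := by
    apply Integrable.mono hint_f haesm
    rw [ae_restrict_iff' measurableSet_Ioi]
    refine Eventually.of_forall fun s hs => ?_
    rw [hfpt, Real.norm_eq_abs, Real.norm_eq_abs, abs_mul]
    have h1 : |1 - 2 * Phi (b * Real.sqrt s)| ≤ 1 :=
      abs_le.2 ⟨by linarith [Phi_le_one (b * Real.sqrt s)],
        by linarith [Phi_nonneg (b * Real.sqrt s)]⟩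
    calc |1 - 2 * Phi (b * Real.sqrt s)| * |f s| ≤ 1 * |f s| :=
          mul_le_mul_of_nonneg_right h1 (abs_nonneg _)
    _ = |f s| := one_mul _
  have hRHSint : IntegrableOn (fun s => K1 * f s + K2 * (s * f s)) (Ioi (0:ℝ)) :=
    (hint_f.const_mul K1).add (hint_sf.const_mul K2)
  have hle := setIntegral_mono_on hLHSint hRHSint measurableSet_Ioi hpt
  have hR : ∫ s in Ioi (0:ℝ), (K1 * f s + K2 * (s * f s)) = K1 + K2 * m := by
    rw [integral_add (hint_f.const_mul K1) (hint_sf.const_mul K2),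
      integral_const_mul, integral_const_mul]
    rw [hfdef]
    rw [integral_fpt' hb hc, integral_sfpt' hb hc]
    rw [hmdef]; ring
  have hval : K1 + K2 * m = 1 - 2 * hfun b m := by rw [hK1, hK2]; ring
  have harg : b * Real.sqrt m = -Real.sqrt (c * (-b)) := by
    have h2 : ((-b):ℝ)^2 * m = c * (-b) := by
      rw [hmdef]; field_simp
    rw [show b * Real.sqrt m = -((-b) * Real.sqrt m) by ring]
    congr 1
    calc (-b) * Real.sqrt m = Real.sqrt ((-b)^2) * Real.sqrt m := by
          rw [Real.sqrt_sq hnb.le]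
    _ = Real.sqrt ((-b)^2 * m) := (Real.sqrt_mul (sq_nonneg _) m).symm
    _ = Real.sqrt (c * (-b)) := by rw [h2]
  have hgoalrhs : 1 - 2 * Phi (-Real.sqrt (c * |b|)) = 1 - 2 * hfun b m := by
    rw [abs_of_neg hb, hfun, harg]
  rw [hgoalrhs]
  calc (∫ s in Ioi (0:ℝ), (1 - 2 * Phi (b * Real.sqrt s)) * fpt a x b s)
      ≤ ∫ s in Ioi (0:ℝ), (K1 * f s + K2 * (s * f s)) := hle
  _ = K1 + K2 * m := hR
  _ = 1 - 2 * hfun b m := hval
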